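/- (Lemma on three spheres.) Let n ≥ 2, let x₀ ∈ ℝⁿ, R > 0 and 0 < k < 1, and let x₁, x₂ ∈ ℝⁿ with |x₁ − x₀| = R and |x₂ − x₀| = kR. Then there exist a point c ∈ ℝⁿ and a radius R₃ > 0 such that: (1) x₁ and x₂ are symmetric with respect to the sphere S(c,R₃), i.e., x₁ ≠ c and x₂ = c + R₃²·(x₁ − c)/|x₁ − c|²; (2) both x₀ and x₂ lie in the closed ball bounded by S(c,R₃), i.e., |x₀ − c| ≤ R₃ and |x₂ − c| ≤ R₃; (3) kR/√(1 + k²) ≤ R₃ ≤ kR/(1 − k). -/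

import Mathlib

open MeasureTheory Metric Set

set_option maxHeartbeats 1000000

/-- Lemma on three spheres: for `x₁` on the sphere `S(x₀,R)` and `x₂` on the sphere
`S(x₀,kR)` there is a sphere `S(c,R₃)` with respect to which `x₁` and `x₂` are symmetric,
whose closed ball contains `x₀` and `x₂`, and whose radius satisfies
`kR/√(1+k²) ≤ R₃ ≤ kR/(1−k)`. -/
theorem three_spheres_lemma (n : ℕ) (hn : 2 ≤ n)
    (x₀ x₁ x₂ : EuclideanSpace ℝ (Fin n))
    (R k : ℝ) (hR : 0 < R) (hk0 : 0 < k) (hk1 : k < 1)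
    (h1 : ‖x₁ - x₀‖ = R) (h2 : ‖x₂ - x₀‖ = k * R) :
    ∃ (c : EuclideanSpace ℝ (Fin n)) (R₃ : ℝ), 0 < R₃ ∧
      x₁ ≠ c ∧ x₂ = c + (R₃ ^ 2 / ‖x₁ - c‖ ^ 2) • (x₁ - c) ∧
      ‖x₀ - c‖ ≤ R₃ ∧ ‖x₂ - c‖ ≤ R₃ ∧
      k * R / Real.sqrt (1 + k ^ 2) ≤ R₃ ∧ R₃ ≤ k * R / (1 - k) := by
  have hk1' : 0 < 1 - k := by linarith
  set d : ℝ := ‖x₂ - x₁‖ with hd_def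
  have hd : 0 < d := by
    rw [hd_def, norm_pos_iff, sub_ne_zero]
    intro h
    rw [h, h1] at h2
    nlinarith
  set ρ : ℝ := k * R / (1 - k) with hρ_def
  have hρ : 0 < ρ := by
    apply div_pos (by positivity) hk1'
  have hρeq : ρ * (1 - k) = k * R := by
    rw [hρ_def, div_mul_cancel₀ _ hk1'.ne']
  set D : ℝ := Real.sqrt (d ^ 2 + 4 * ρ ^ 2) with hD_def
  have hD2 : D ^ 2 = d ^ 2 + 4 * ρ ^ 2 := Real.sq_sqrt (by positivity)
  have hDnn : 0 ≤ D := Real.sqrt_nonneg _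
  have hDd : d < D := by nlinarith
  set t : ℝ := (D - d) / 2 with ht_def
  have ht : 0 < t := by rw [ht_def]; linarith
  have hts : t * (t + d) = ρ ^ 2 := by
    rw [ht_def]; linear_combination hD2 / 4
  -- key inequality: t * (1 - k^2) ≥ k^2 * d
  have dle : d ≤ (1 + k) * R := by
    calc d = ‖(x₂ - x₀) - (x₁ - x₀)‖ := by rw [hd_def]; congr 1; abel
    _ ≤ ‖x₂ - x₀‖ + ‖x₁ - x₀‖ := norm_sub_le _ _
    _ = (1 + k) * R := by rw [h1, h2]; ring
  have ht₀ : k ^ 2 * d ≤ t * (1 - k ^ 2) := by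
    have h1A : ρ ^ 2 * (1 - k) ^ 2 = k ^ 2 * R ^ 2 := by
      linear_combination (ρ * (1 - k) + k * R) * hρeq
    have h2A : k ^ 2 * d ^ 2 ≤ t ^ 2 * (1 - k ^ 2) ^ 2 + t * d * (1 - k ^ 2) ^ 2 := by
      nlinarith [mul_le_mul dle dle hd.le (by positivity : (0:ℝ) ≤ (1 + k) * R)]
    by_contra h
    push_neg at h
    have hpos : 0 < t * (1 - k ^ 2) + d := by nlinarith [mul_pos ht (show (0:ℝ) < 1 - k ^ 2 by nlinarith)]
    nlinarith [mul_pos (sub_pos.mpr h) hpos]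
  set l : ℝ := t / d with hl_def
  have hl : 0 < l := div_pos ht hd
  have hld : l * d = t := by rw [hl_def]; field_simp
  set c : EuclideanSpace ℝ (Fin n) := x₂ + l • (x₂ - x₁) with hc_def
  have hx1c : x₁ - c = (-(1 + l)) • (x₂ - x₁) := by
    rw [hc_def]; module
  have hnx1c : ‖x₁ - c‖ = (1 + l) * d := by
    rw [hx1c, norm_smul, norm_neg, Real.norm_eq_abs, abs_of_pos (by linarith), hd_def]
  have hx2c : x₂ - c = (-l) • (x₂ - x₁) := by
    rw [hc_def]; module
  have hnx2c : ‖x₂ - c‖ = t := by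
    rw [hx2c, norm_smul, norm_neg, Real.norm_eq_abs, abs_of_pos hl, ← hd_def, hld]
  refine ⟨c, ρ, hρ, ?_, ?_, ?_, ?_, ?_, ?_⟩
  · -- x₁ ≠ c
    intro h
    rw [h, sub_self, norm_zero] at hnx1c
    nlinarith
  · -- inversion equation
    rw [hnx1c, hx1c, smul_smul]
    have hcoef : ρ ^ 2 / ((1 + l) * d) ^ 2 * (-(1 + l)) = -l := by
      have h1l : (0:ℝ) < 1 + l := by linarith
      field_simp
      have : ρ ^ 2 = l * (1 + l) * d ^ 2 := by
        rw [← hts, ← hld]; ring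
      rw [this]
    rw [hcoef, hc_def]; module
  · -- ‖x₀ - c‖ ≤ ρ
    have hx0c : x₀ - c = (x₀ - x₂) - l • (x₂ - x₁) := by
      rw [hc_def]; module
    have hsq : ‖x₀ - c‖ ^ 2 = ‖x₀ - x₂‖ ^ 2
        - 2 * (l * inner ℝ (x₀ - x₂) (x₂ - x₁)) + l ^ 2 * d ^ 2 := by
      rw [hx0c, @norm_sub_sq_real, real_inner_smul_right, norm_smul,
        Real.norm_eq_abs, abs_of_pos hl, ← hd_def, mul_pow]
    set q : ℝ := inner ℝ (x₂ - x₀) (x₁ - x₀) with hq_def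
    have hip : (inner ℝ (x₀ - x₂) (x₂ - x₁) : ℝ) = q - (k * R) ^ 2 := by
      have e1 : x₀ - x₂ = -(x₂ - x₀) := by abel
      have e2 : x₂ - x₁ = (x₂ - x₀) - (x₁ - x₀) := by abel
      rw [e1, e2, inner_neg_left, inner_sub_right, real_inner_self_eq_norm_sq, h2,
        hq_def]
      ring
    have hd2 : d ^ 2 = (k * R) ^ 2 - 2 * q + R ^ 2 := by
      have e2 : x₂ - x₁ = (x₂ - x₀) - (x₁ - x₀) := by abel
      rw [hd_def, e2, @norm_sub_sq_real, h1, h2, hq_def]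
    have hn02 : ‖x₀ - x₂‖ = k * R := by rw [norm_sub_rev, h2]
    have hsq' : ‖x₀ - c‖ ^ 2 ≤ ρ ^ 2 := by
      rw [hsq, hip, hn02, ← hts, ← hld]
      have hdd : k ^ 2 * d * d ≤ t * (1 - k ^ 2) * d :=
        mul_le_mul_of_nonneg_right ht₀ hd.le
      rw [← hld] at hdd
      nlinarith [hd2, hdd, hd, hl]
    nlinarith [norm_nonneg (x₀ - c), hρ]
  · -- ‖x₂ - c‖ ≤ ρ
    rw [hnx2c]
    nlinarith
  · -- lower bound
    have hs : 1 - k ≤ Real.sqrt (1 + k ^ 2) := by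
      have h := Real.sqrt_le_sqrt (show (1 - k) ^ 2 ≤ 1 + k ^ 2 by nlinarith)
      rwa [Real.sqrt_sq hk1'.le] at h
    rw [hρ_def]
    apply div_le_div_of_nonneg_left (by positivity) hk1' hs
  · exact le_refl _
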